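/- Let Z₀ ~ Bin(ρ·nq, p_f) with ρ ≥ 1, n ≥ 2, q ≥ 1 integers and p_f ∈ (0,1). If p_f·R_f ≥ (C_lc + C_fs + C_tx)/((1 - logκ/√n)·nq) with logκ/√n < 1, then the event {Z₀ ≥ (1 - logκ/√n)·ρ·nq·p_f} implies Z₀·R_f ≥ C_lc + ρ·C_fs + ρ·C_tx, and by the Chernoff bound the complementary event has probability at most exp(-(log²κ/(2n))·ρ·nq·p_f). -/

import Mathlib

open Real
open scoped ENNReal

private lemma key_log {x : ℝ} (hx0 : 0 < x) (hx1 : x ≤ 1) :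
    (x ^ 2 - 1) / 2 ≤ x * Real.log x := by
  have hderiv : ∀ y : ℝ, 0 < y →
      HasDerivAt (fun y : ℝ => y * Real.log y - (y ^ 2 - 1) / 2)
        (Real.log y + 1 - y) y := by
    intro y hy
    have h1 : HasDerivAt (fun y : ℝ => y * Real.log y) (Real.log y + 1) y := by
      have := (hasDerivAt_id y).mul (Real.hasDerivAt_log hy.ne')
      refine this.congr_deriv ?_
      field_simp
      simp only [id]
      ring
    have h2 : HasDerivAt (fun y : ℝ => (y ^ 2 - 1) / 2) y y := by
      have := ((hasDerivAt_pow 2 y).sub_const 1).div_const 2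
      refine this.congr_deriv ?_
      norm_num
    exact h1.sub h2
  rcases eq_or_lt_of_le hx1 with h | h
  · subst h; simp
  have hg : AntitoneOn (fun y : ℝ => y * Real.log y - (y ^ 2 - 1) / 2)
      (Set.Icc x 1) := by
    apply antitoneOn_of_deriv_nonpos (convex_Icc x 1)
    · apply ContinuousOn.sub
      · apply continuousOn_id.mul
        apply Real.continuousOn_log.mono
        intro y hy
        exact ne_of_gt (lt_of_lt_of_le hx0 hy.1)
      · exact (((continuous_pow 2).sub continuous_const).div_const 2).continuousOn
    · intro y hy
      rw [interior_Icc] at hy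
      exact (hderiv y (lt_trans hx0 hy.1)).differentiableAt.differentiableWithinAt
    · intro y hy
      rw [interior_Icc] at hy
      have hy0 : 0 < y := lt_trans hx0 hy.1
      rw [(hderiv y hy0).deriv]
      have := Real.log_le_sub_one_of_pos hy0
      linarith
  have h01 := hg (Set.left_mem_Icc.mpr hx1) (Set.right_mem_Icc.mpr hx1) hx1
  simp only [Real.log_one, mul_zero, one_pow, sub_self, zero_div, sub_zero] at h01
  linarith

private lemma exponent_bound {δ p M : ℝ} (hδ0 : 0 ≤ δ) (hδ1 : δ < 1)
    (hM : 0 ≤ M) (hp : 0 ≤ p) :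
    -(Real.log (1 - δ)) * ((1 - δ) * M * p) + M * (-(p * δ)) ≤
      -(δ ^ 2 / 2) * M * p := by
  have hx0 : (0:ℝ) < 1 - δ := by linarith
  have hkey := key_log hx0 (by linarith : (1:ℝ) - δ ≤ 1)
  have hkey2 : 0 ≤ (1 - δ) * Real.log (1 - δ) + δ - δ ^ 2 / 2 := by nlinarith
  have hprod := mul_nonneg (mul_nonneg hM hp) hkey2
  nlinarith [hprod]

theorem stmt_4 (ρ n q : ℕ) (hρ : 1 ≤ ρ) (hn : 2 ≤ n) (hq : 1 ≤ q)
    (p_f R_f C_lc C_fs C_tx κ : ℝ) (hpf0 : 0 < p_f) (hpf1 : p_f < 1)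
    (hR : 0 < R_f) (hClc : 0 < C_lc) (hCfs : 0 < C_fs) (hCtx : 0 < C_tx)
    (hκ0 : 0 ≤ Real.log κ) (hκ : Real.log κ / Real.sqrt n < 1)
    (hreward : (C_lc + C_fs + C_tx) / ((1 - Real.log κ / Real.sqrt n) * ((n : ℝ) * q))
        ≤ p_f * R_f) :
    (∀ Z₀ : ℝ,
        (1 - Real.log κ / Real.sqrt n) * ((ρ : ℝ) * n * q) * p_f ≤ Z₀ →
          C_lc + (ρ : ℝ) * C_fs + (ρ : ℝ) * C_tx ≤ Z₀ * R_f) ∧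
      (PMF.binomial (Real.toNNReal p_f) (Real.toNNReal_le_one.mpr hpf1.le)
            (ρ * n * q)).toOuterMeasure
          {k | ((k : ℕ) : ℝ) < (1 - Real.log κ / Real.sqrt n) * ((ρ : ℝ) * n * q) * p_f} ≤
        ENNReal.ofReal
          (Real.exp (-((Real.log κ) ^ 2 / (2 * n)) * ((ρ : ℝ) * n * q) * p_f)) := by
  have hn0 : (0:ℝ) < n := by positivity
  have hq0 : (0:ℝ) < q := by exact_mod_cast Nat.lt_of_lt_of_le Nat.zero_lt_one hq
  have hρ0 : (1:ℝ) ≤ ρ := by exact_mod_cast hρ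
  set δ : ℝ := Real.log κ / Real.sqrt n with hδdef
  have hδ0 : 0 ≤ δ := div_nonneg hκ0 (Real.sqrt_nonneg _)
  have hδ1 : δ < 1 := hκ
  set m : ℕ := ρ * n * q with hm
  have hmcast : (m : ℝ) = (ρ : ℝ) * n * q := by push_cast [hm]; ring
  set a : ℝ := (1 - δ) * ((ρ : ℝ) * n * q) * p_f with ha
  constructor
  · -- profitability
    intro Z₀ hZ
    have hpos : 0 < (1 - δ) * ((n:ℝ) * q) := by
      apply mul_pos (by linarith) (by positivity)
    have h1 : C_lc + C_fs + C_tx ≤ p_f * R_f * ((1 - δ) * ((n:ℝ) * q)) :=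
      (div_le_iff₀ hpos).mp hreward
    have h2 : (ρ:ℝ) * (C_lc + C_fs + C_tx) ≤
        (ρ:ℝ) * (p_f * R_f * ((1 - δ) * ((n:ℝ) * q))) :=
      mul_le_mul_of_nonneg_left h1 (by linarith)
    have h4 : (ρ:ℝ) * (p_f * R_f * ((1 - δ) * ((n:ℝ) * q))) = a * R_f := by
      rw [ha]; ring
    have h5 : a * R_f ≤ Z₀ * R_f := mul_le_mul_of_nonneg_right hZ hR.le
    have h3 : C_lc + (ρ:ℝ) * C_fs + (ρ:ℝ) * C_tx ≤ (ρ:ℝ) * (C_lc + C_fs + C_tx) := by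
      nlinarith
    linarith
  · -- Chernoff bound
    set t : ℝ := -Real.log (1 - δ) with htdef
    have h1δ0 : 0 < 1 - δ := by linarith
    have ht0 : 0 ≤ t := by
      have := Real.log_nonpos (by linarith) (by linarith : (1:ℝ) - δ ≤ 1)
      linarith
    have hexpt : Real.exp (-t) = 1 - δ := by
      rw [htdef, neg_neg, Real.exp_log h1δ0]
    set P := PMF.binomial (Real.toNNReal p_f) (Real.toNNReal_le_one.mpr hpf1.le) m
      with hPdef
    set f : Fin (m + 1) → ℝ := fun k =>
      p_f ^ (k : ℕ) * (1 - p_f) ^ (m - (k : ℕ)) * (m.choose (k : ℕ)) *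
        Real.exp (t * (a - (k : ℕ))) with hf
    have hfnonneg : ∀ k : Fin (m + 1), 0 ≤ f k := by
      intro k
      have h1p : (0:ℝ) ≤ 1 - p_f := by linarith
      positivity
    have hP : ∀ k : Fin (m + 1),
        P k = ENNReal.ofReal
          (p_f ^ (k : ℕ) * (1 - p_f) ^ (m - (k : ℕ)) * (m.choose (k : ℕ))) := by
      intro k
      have h1p : (1 : ℝ≥0∞) - ENNReal.ofReal p_f = ENNReal.ofReal (1 - p_f) := by
        rw [← ENNReal.ofReal_one, ← ENNReal.ofReal_sub _ hpf0.le]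
      have h1pr : (0:ℝ) ≤ 1 - p_f := by linarith
      rw [hPdef, PMF.binomial_apply, Fin.val_last,
        ENNReal.ofReal_mul (by positivity), ENNReal.ofReal_mul (by positivity),
        ENNReal.ofReal_pow hpf0.le, ENNReal.ofReal_pow h1pr,
        ENNReal.ofReal_natCast, ← h1p]
      rfl
    -- step 1: measure bounded by sum of ofReal (f k)
    have step1 : P.toOuterMeasure {k | ((k : ℕ) : ℝ) < a} ≤
        ∑ k : Fin (m + 1), ENNReal.ofReal (f k) := by
      rw [PMF.toOuterMeasure_apply, tsum_fintype]
      apply Finset.sum_le_sum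
      intro k _
      rw [Set.indicator_apply]
      simp only [Set.mem_setOf_eq]
      by_cases hk : ((k : ℕ) : ℝ) < a
      · rw [if_pos hk, hP k]
        apply ENNReal.ofReal_le_ofReal
        have h1 : 1 ≤ Real.exp (t * (a - (k : ℕ))) := by
          rw [← Real.exp_zero]
          exact Real.exp_le_exp.mpr (mul_nonneg ht0 (by linarith))
        have h1p : (0:ℝ) ≤ 1 - p_f := by linarith
        have hb : (0:ℝ) ≤ p_f ^ (k : ℕ) * (1 - p_f) ^ (m - (k : ℕ)) *
            (m.choose (k : ℕ)) := by positivity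
        calc p_f ^ (k : ℕ) * (1 - p_f) ^ (m - (k : ℕ)) * (m.choose (k : ℕ))
            ≤ p_f ^ (k : ℕ) * (1 - p_f) ^ (m - (k : ℕ)) * (m.choose (k : ℕ)) *
              Real.exp (t * (a - (k : ℕ))) := le_mul_of_one_le_right hb h1
          _ = f k := rfl
      · rw [if_neg hk]
        exact zero_le
    -- step 2: sum of ofReal = ofReal sum
    have step2 : ∑ k : Fin (m + 1), ENNReal.ofReal (f k) =
        ENNReal.ofReal (∑ k : Fin (m + 1), f k) :=
      (ENNReal.ofReal_sum_of_nonneg (fun k _ => hfnonneg k)).symm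
    -- step 3: real sum computation
    have step3 : ∑ k : Fin (m + 1), f k =
        Real.exp (t * a) * (p_f * Real.exp (-t) + (1 - p_f)) ^ m := by
      have : ∑ k : Fin (m + 1), f k = ∑ k ∈ Finset.range (m + 1),
          p_f ^ k * (1 - p_f) ^ (m - k) * (m.choose k) *
            Real.exp (t * (a - k)) := by
        exact Fin.sum_univ_eq_sum_range
          (fun k => p_f ^ k * (1 - p_f) ^ (m - k) * (m.choose k) *
            Real.exp (t * (a - k))) (m + 1)
      rw [this, add_pow, Finset.mul_sum]
      apply Finset.sum_congr rfl
      intro k _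
      have hexpk : Real.exp (t * (a - (k:ℕ))) =
          Real.exp (t * a) * Real.exp (-t) ^ k := by
        rw [← Real.exp_nat_mul, ← Real.exp_add]
        congr 1
        ring
      rw [hexpk, mul_pow]
      ring
    -- step 4: the real bound
    have hMp : (0:ℝ) ≤ ((ρ:ℝ) * n * q) * p_f := by positivity
    have hpδ1 : p_f * δ < 1 := by nlinarith
    have hbase : p_f * Real.exp (-t) + (1 - p_f) = 1 - p_f * δ := by
      rw [hexpt]; ring
    have hpow : (1 - p_f * δ) ^ m ≤ Real.exp (-(p_f * δ)) ^ m := by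
      apply pow_le_pow_left₀ (by linarith)
      have := Real.add_one_le_exp (-(p_f * δ))
      linarith
    have hδsq : δ ^ 2 = Real.log κ ^ 2 / n := by
      rw [hδdef, div_pow, Real.sq_sqrt hn0.le]
    have hexponent : t * a + (m : ℝ) * (-(p_f * δ)) ≤
        -((Real.log κ) ^ 2 / (2 * n)) * ((ρ : ℝ) * n * q) * p_f := by
      have hhalf : (Real.log κ) ^ 2 / (2 * n) = δ ^ 2 / 2 := by
        rw [hδsq, div_div, mul_comm (n:ℝ) 2]
      have h1 : t * a = -(Real.log (1 - δ)) * ((1 - δ) * (((ρ:ℝ) * n * q) * p_f)) := by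
        rw [htdef, ha]; ring
      have h2 : -((Real.log κ) ^ 2 / (2 * n)) * ((ρ : ℝ) * n * q) * p_f =
          -(δ ^ 2 / 2) * ((ρ : ℝ) * n * q) * p_f := by rw [hhalf]
      rw [h1, hmcast, h2]
      have := exponent_bound hδ0 hδ1 (by positivity : (0:ℝ) ≤ (ρ:ℝ) * n * q) hpf0.le
      linarith [this]
    -- assemble
    calc P.toOuterMeasure {k | ((k : ℕ) : ℝ) < a}
        ≤ ∑ k : Fin (m + 1), ENNReal.ofReal (f k) := step1
      _ = ENNReal.ofReal (∑ k : Fin (m + 1), f k) := step2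
      _ ≤ ENNReal.ofReal
          (Real.exp (-((Real.log κ) ^ 2 / (2 * n)) * ((ρ : ℝ) * n * q) * p_f)) := by
          apply ENNReal.ofReal_le_ofReal
          rw [step3, hbase]
          calc Real.exp (t * a) * (1 - p_f * δ) ^ m
              ≤ Real.exp (t * a) * Real.exp (-(p_f * δ)) ^ m :=
                mul_le_mul_of_nonneg_left hpow (Real.exp_pos _).le
            _ = Real.exp (t * a + (m : ℝ) * (-(p_f * δ))) := by
                rw [← Real.exp_nat_mul, ← Real.exp_add]
            _ ≤ Real.exp (-((Real.log κ) ^ 2 / (2 * n)) * ((ρ : ℝ) * n * q) * p_f) :=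
                Real.exp_le_exp.mpr hexponent
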